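/- arXiv:2006.12287 — 2 statements merged into one kernel-verified Lean document; each statement's English description precedes it below -/
import Mathlib

section
/- Let X, X' be i.i.d. uniform on the unit square [0,1]^2 with supremum-norm distance d, and for x ∈ [0,1]^2 let F_x(t) = P(d(x,X') ≤ t). Then for 0 ≤ t' ≤ t ≤ 1/2, the quantity Γ_1(t,t') := ∫ F_x(t) F_x(t') dμ(x) equals ((-1/3)t'^3 - t'^2 t - 2 t' t^2 + 4 t' t)^2. -/
open MeasureTheory

/-- The uniform distribution on the unit square `[0,1]^2 ⊆ ℝ²`
(with `Fin 2 → ℝ` carrying the supremum norm). -/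
noncomputable def unifSquare : Measure (Fin 2 → ℝ) :=
  volume.restrict (Set.Icc (0 : Fin 2 → ℝ) 1)

private lemma int_quad (a b c d : ℝ) :
    ∫ u in a..b, (u + c) * (u + d)
      = (b^3/3 + (c+d)/2*b^2 + c*d*b) - (a^3/3 + (c+d)/2*a^2 + c*d*a) := by
  have e : ∀ u : ℝ, (u + c) * (u + d) = u^2 + ((c+d)*u + c*d) := fun u => by ring
  simp_rw [e]
  have i1 : IntervalIntegrable (fun u : ℝ => u^2) volume a b :=
    (continuous_pow 2).intervalIntegrable _ _
  have i2 : IntervalIntegrable (fun u : ℝ => (c+d)*u) volume a b :=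
    (continuous_const.mul continuous_id).intervalIntegrable _ _
  have i3 : IntervalIntegrable (fun _ : ℝ => c*d) volume a b := intervalIntegrable_const
  rw [intervalIntegral.integral_add i1 (i2.add i3), intervalIntegral.integral_add i2 i3,
    integral_pow, intervalIntegral.integral_const_mul, integral_id,
    intervalIntegral.integral_const, smul_eq_mul]
  ring

private lemma int_lin (a b p q : ℝ) :
    ∫ u in a..b, (p*u + q) = (p/2*b^2 + q*b) - (p/2*a^2 + q*a) := by
  have i2 : IntervalIntegrable (fun u : ℝ => p*u) volume a b :=
    (continuous_const.mul continuous_id).intervalIntegrable _ _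
  have i3 : IntervalIntegrable (fun _ : ℝ => q) volume a b := intervalIntegrable_const
  rw [intervalIntegral.integral_add i2 i3, intervalIntegral.integral_const_mul,
    integral_id, intervalIntegral.integral_const, smul_eq_mul]
  ring

private lemma ball_meas (s : ℝ) (hs : 0 ≤ s) (x : Fin 2 → ℝ)
    (hx : x ∈ Set.Icc (0 : Fin 2 → ℝ) 1) :
    unifSquare {y | dist x y ≤ s}
      = ENNReal.ofReal (min (x 0 + s) 1 - max (x 0 - s) 0)
        * ENNReal.ofReal (min (x 1 + s) 1 - max (x 1 - s) 0) := by
  have hset : {y : Fin 2 → ℝ | dist x y ≤ s}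
      = Set.Icc (fun i => x i - s) (fun i => x i + s) := by
    ext y
    simp only [Set.mem_setOf_eq, Set.mem_Icc, Pi.le_def]
    rw [dist_pi_le_iff hs, ← forall_and]
    refine forall_congr' fun i => ?_
    rw [Real.dist_eq, abs_le]
    constructor
    · rintro ⟨ha, hb⟩; constructor <;> linarith
    · rintro ⟨ha, hb⟩; constructor <;> linarith
  rw [unifSquare, Measure.restrict_apply' measurableSet_Icc, hset, Set.Icc_inter_Icc,
    Real.volume_Icc_pi, Fin.prod_univ_two]
  congr 1

private lemma h_nonneg (s : ℝ) (hs : 0 ≤ s) (u : ℝ) (hu : u ∈ Set.Icc (0:ℝ) 1) :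
    0 ≤ min (u + s) 1 - max (u - s) 0 := by
  obtain ⟨hu0, hu1⟩ := hu
  have : max (u - s) 0 ≤ min (u + s) 1 := by
    apply max_le
    · exact le_min (by linarith) (by linarith)
    · exact le_min (by linarith) zero_le_one
  linarith

/-- For the unit square with the supremum-norm distance and `F_x(t) = P(d(x,X') ≤ t)`:
for `0 ≤ t' ≤ t ≤ 1/2`,
`Γ₁(t,t') = ∫ F_x(t) F_x(t') dμ(x) = (-t'³/3 - t'² t - 2 t' t² + 4 t' t)²`. -/
theorem stmt15 (t t' : ℝ) (h0 : 0 ≤ t') (h1 : t' ≤ t) (h2 : t ≤ 1 / 2) :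
    ∫ x, (unifSquare {y | dist x y ≤ t}).toReal
        * (unifSquare {y | dist x y ≤ t'}).toReal ∂unifSquare
      = (-(1 / 3) * t' ^ 3 - t' ^ 2 * t - 2 * t' * t ^ 2 + 4 * t' * t) ^ 2 := by
  have ht0 : 0 ≤ t := h0.trans h1
  set φ : ℝ → ℝ := fun u =>
    (min (u + t) 1 - max (u - t) 0) * (min (u + t') 1 - max (u - t') 0) with hφ
  -- Step 1: rewrite the integrand on the square
  have key1 : ∫ x, (unifSquare {y | dist x y ≤ t}).toReal
        * (unifSquare {y | dist x y ≤ t'}).toReal ∂unifSquare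
      = ∫ x in Set.Icc (0 : Fin 2 → ℝ) 1, φ (x 0) * φ (x 1) := by
    apply setIntegral_congr_fun (μ := volume) measurableSet_Icc
    intro x hx
    have hx0 : x 0 ∈ Set.Icc (0:ℝ) 1 := ⟨hx.1 0, hx.2 0⟩
    have hx1 : x 1 ∈ Set.Icc (0:ℝ) 1 := ⟨hx.1 1, hx.2 1⟩
    dsimp only
    rw [ball_meas t ht0 x hx, ball_meas t' h0 x hx, ENNReal.toReal_mul, ENNReal.toReal_mul,
      ENNReal.toReal_ofReal (h_nonneg t ht0 _ hx0), ENNReal.toReal_ofReal (h_nonneg t ht0 _ hx1),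
      ENNReal.toReal_ofReal (h_nonneg t' h0 _ hx0), ENNReal.toReal_ofReal (h_nonneg t' h0 _ hx1)]
    simp only [hφ]
    ring
  -- Step 2: Fubini, factor the double integral
  have key2 : ∫ x in Set.Icc (0 : Fin 2 → ℝ) 1, φ (x 0) * φ (x 1)
      = (∫ u in Set.Icc (0:ℝ) 1, φ u) ^ 2 := by
    rw [← integral_indicator measurableSet_Icc, ← integral_indicator measurableSet_Icc]
    have hpt : ∀ x : Fin 2 → ℝ,
        (Set.Icc (0 : Fin 2 → ℝ) 1).indicator (fun x => φ (x 0) * φ (x 1)) x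
          = ((Set.Icc (0:ℝ) 1).indicator φ (x 0)) * ((Set.Icc (0:ℝ) 1).indicator φ (x 1)) := by
      intro x
      by_cases hx : x ∈ Set.Icc (0 : Fin 2 → ℝ) 1
      · have hx0 : x 0 ∈ Set.Icc (0:ℝ) 1 := ⟨hx.1 0, hx.2 0⟩
        have hx1 : x 1 ∈ Set.Icc (0:ℝ) 1 := ⟨hx.1 1, hx.2 1⟩
        rw [Set.indicator_of_mem hx, Set.indicator_of_mem hx0, Set.indicator_of_mem hx1]
      · rw [Set.indicator_of_notMem hx]
        have : ¬ ∀ i, x i ∈ Set.Icc (0:ℝ) 1 := by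
          intro h
          exact hx ⟨fun i => (h i).1, fun i => (h i).2⟩
        push_neg at this
        obtain ⟨i, hi⟩ := this
        fin_cases i
        · rw [Set.indicator_of_notMem (show x 0 ∉ Set.Icc (0:ℝ) 1 from hi), zero_mul]
        · rw [Set.indicator_of_notMem (show x 1 ∉ Set.Icc (0:ℝ) 1 from hi), mul_zero]
    simp_rw [hpt]
    have := MeasureTheory.integral_fintype_prod_volume_eq_pow (𝕜 := ℝ) (ι := Fin 2)
      ((Set.Icc (0:ℝ) 1).indicator φ)
    simpa [Fin.prod_univ_two] using this
  -- Step 3: the one-dimensional integral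
  have hc : Continuous φ := by
    apply Continuous.mul <;>
      exact ((continuous_id.add continuous_const).min continuous_const).sub
        ((continuous_id.sub continuous_const).max continuous_const)
  have key3 : ∫ u in Set.Icc (0:ℝ) 1, φ u
      = -(1 / 3) * t' ^ 3 - t' ^ 2 * t - 2 * t' * t ^ 2 + 4 * t' * t := by
    rw [integral_Icc_eq_integral_Ioc, ← intervalIntegral.integral_of_le zero_le_one]
    have split : ∫ u in (0:ℝ)..1, φ u
        = (∫ u in (0:ℝ)..t', φ u) + (∫ u in t'..t, φ u) + (∫ u in t..(1-t), φ u)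
          + (∫ u in (1-t)..(1-t'), φ u) + (∫ u in (1-t')..1, φ u) := by
      rw [intervalIntegral.integral_add_adjacent_intervals (hc.intervalIntegrable _ _)
          (hc.intervalIntegrable _ _),
        intervalIntegral.integral_add_adjacent_intervals (hc.intervalIntegrable _ _)
          (hc.intervalIntegrable _ _),
        intervalIntegral.integral_add_adjacent_intervals (hc.intervalIntegrable _ _)
          (hc.intervalIntegrable _ _),
        intervalIntegral.integral_add_adjacent_intervals (hc.intervalIntegrable _ _)
          (hc.intervalIntegrable _ _)]
    rw [split]
    have e1 : ∫ u in (0:ℝ)..t', φ u = ∫ u in (0:ℝ)..t', (u + t) * (u + t') := by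
      apply intervalIntegral.integral_congr
      intro u hu
      rw [Set.uIcc_of_le h0] at hu
      obtain ⟨ha, hb⟩ := hu
      simp only [hφ]
      rw [min_eq_left (by linarith), max_eq_right (by linarith),
        min_eq_left (by linarith), max_eq_right (by linarith)]
      ring
    have e2 : ∫ u in t'..t, φ u = ∫ u in t'..t, (2*t'*u + 2*t*t') := by
      apply intervalIntegral.integral_congr
      intro u hu
      rw [Set.uIcc_of_le h1] at hu
      obtain ⟨ha, hb⟩ := hu
      simp only [hφ]
      rw [min_eq_left (by linarith), max_eq_right (by linarith),
        min_eq_left (by linarith), max_eq_left (by linarith)]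
      ring
    have e3 : ∫ u in t..(1-t), φ u = ∫ u in t..(1-t), (4*t*t' : ℝ) := by
      apply intervalIntegral.integral_congr
      intro u hu
      rw [Set.uIcc_of_le (by linarith)] at hu
      obtain ⟨ha, hb⟩ := hu
      simp only [hφ]
      rw [min_eq_left (by linarith), max_eq_left (by linarith),
        min_eq_left (by linarith), max_eq_left (by linarith)]
      ring
    have e4 : ∫ u in (1-t)..(1-t'), φ u
        = ∫ u in (1-t)..(1-t'), (-(2*t')*u + 2*t'*(1+t)) := by
      apply intervalIntegral.integral_congr
      intro u hu
      rw [Set.uIcc_of_le (by linarith)] at hu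
      obtain ⟨ha, hb⟩ := hu
      simp only [hφ]
      rw [min_eq_right (by linarith), max_eq_left (by linarith),
        min_eq_left (by linarith), max_eq_left (by linarith)]
      ring
    have e5 : ∫ u in (1-t')..1, φ u
        = ∫ u in (1-t')..1, (u + -(1+t)) * (u + -(1+t')) := by
      apply intervalIntegral.integral_congr
      intro u hu
      rw [Set.uIcc_of_le (by linarith)] at hu
      obtain ⟨ha, hb⟩ := hu
      simp only [hφ]
      rw [min_eq_right (by linarith), max_eq_left (by linarith),
        min_eq_right (by linarith), max_eq_left (by linarith)]
      ring
    rw [e1, e2, e3, e4, e5, int_quad, int_lin, int_lin, int_quad,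
      intervalIntegral.integral_const, smul_eq_mul]
    ring
  rw [key1, key2, key3]
end

section
/- Let F : [a,b] → [0,1] be a distribution function of a measure on (a,b], continuously differentiable with derivative f strictly positive on (a,b) (possibly f(a) = 0 or f(b) = 0). Let h_n → h uniformly in D[a,b] with h continuous, t_n → 0 with t_n ≠ 0, and F + t_n h_n a distribution function of a measure on (a,b] for all n. Then the quotient ((F + t_n h_n)^{-1} − F^{-1})/t_n converges in L^1(0,1) to −(h/f) ∘ F^{-1}, i.e., the inversion map F ↦ F^{-1} is Hadamard differentiable at F tangentially to C[a,b] as a map into L^1(0,1), with derivative h ↦ −(h/f) ∘ F^{-1}. -/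
open MeasureTheory Filter Set

private noncomputable def qtl (a b : ℝ) (G : ℝ → ℝ) (s : ℝ) : ℝ :=
  sInf {x | x ∈ Set.Icc a b ∧ s ≤ G x}

private lemma qtl_bddBelow (a b : ℝ) (G : ℝ → ℝ) (s : ℝ) :
    BddBelow {x | x ∈ Set.Icc a b ∧ s ≤ G x} :=
  ⟨a, fun _ hx => hx.1.1⟩

private lemma qtl_spec {a b : ℝ} {G : ℝ → ℝ} {s : ℝ} (hab : a ≤ b)
    (hsb : s ≤ G b)
    (hrc : ∀ x ∈ Set.Ico a b, ContinuousWithinAt G (Set.Ici x) x) :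
    qtl a b G s ∈ Set.Icc a b ∧ s ≤ G (qtl a b G s) := by
  set S := {x | x ∈ Set.Icc a b ∧ s ≤ G x} with hS
  have hbS : b ∈ S := ⟨⟨hab, le_rfl⟩, hsb⟩
  have hne : S.Nonempty := ⟨b, hbS⟩
  have hbdd : BddBelow S := qtl_bddBelow a b G s
  have hqa : a ≤ qtl a b G s := le_csInf hne fun x hx => hx.1.1
  have hqb : qtl a b G s ≤ b := csInf_le hbdd hbS
  refine ⟨⟨hqa, hqb⟩, ?_⟩
  by_contra hq
  push_neg at hq
  have hqneb : qtl a b G s ≠ b := by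
    intro he; rw [he] at hq; exact absurd hsb (not_le.2 hq)
  have hqIco : qtl a b G s ∈ Set.Ico a b := ⟨hqa, lt_of_le_of_ne hqb hqneb⟩
  have h1 : ∀ᶠ y in nhdsWithin (qtl a b G s) (Set.Ici (qtl a b G s)), G y < s :=
    Filter.Tendsto.eventually_lt_const hq (hrc _ hqIco)
  rw [eventually_nhdsWithin_iff, Metric.eventually_nhds_iff] at h1
  obtain ⟨δ, hδ, hδ'⟩ := h1
  have hlow : ∀ x ∈ S, qtl a b G s + δ / 2 ≤ x := by
    intro x hx
    have hqx : qtl a b G s ≤ x := csInf_le hbdd hx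
    by_contra hlt
    push_neg at hlt
    have : G x < s := by
      refine hδ' ?_ (by exact hqx)
      rw [Real.dist_eq, abs_of_nonneg (by linarith)]
      linarith
    exact absurd hx.2 (not_le.2 this)
  have : qtl a b G s + δ / 2 ≤ qtl a b G s := le_csInf hne hlow
  linarith

private lemma qtl_lt {a b : ℝ} {G : ℝ → ℝ} {s y : ℝ} (hy : y ∈ Set.Icc a b)
    (hlt : y < qtl a b G s) : G y < s := by
  by_contra hc
  push_neg at hc
  exact absurd (csInf_le (qtl_bddBelow a b G s) ⟨hy, hc⟩) (not_le.2 hlt)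

private lemma qtl_mono {a b : ℝ} {G : ℝ → ℝ} (hab : a ≤ b) (hGb : ∀ u : ℝ, min 1 u ≤ G b) :
    Monotone (fun u => qtl a b G (min 1 u)) := by
  intro u v huv
  refine csInf_le_csInf (qtl_bddBelow a b G _) ⟨b, ⟨⟨hab, le_rfl⟩, hGb v⟩⟩ ?_
  intro x hx
  exact ⟨hx.1, le_trans (min_le_min le_rfl huv) hx.2⟩

private lemma le_of_left_lim {ψ : ℝ → ℝ} {a q c : ℝ} (haq : a < q)
    (hψ : ContinuousWithinAt ψ (Set.Ico a q) q)
    (hup : ∀ y ∈ Set.Ico a q, ψ y ≤ c) : ψ q ≤ c := by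
  have hne : (nhdsWithin q (Set.Ico a q)).NeBot := by
    rw [nhdsWithin_Ico_eq_nhdsLT haq]
    exact nhdsLT_neBot q
  exact le_of_tendsto hψ (eventually_nhdsWithin_of_forall hup)

private lemma mvt_pair {F f : ℝ → ℝ} {a b x y : ℝ}
    (hF : ∀ z ∈ Set.Icc a b, HasDerivWithinAt F (f z) (Set.Icc a b) z)
    (hx : x ∈ Set.Icc a b) (hy : y ∈ Set.Icc a b) :
    ∃ ξ ∈ Set.uIcc x y, |ξ - x| ≤ |y - x| ∧ F y - F x = f ξ * (y - x) := by
  have hcont : ContinuousOn F (Set.Icc a b) := fun z hz => (hF z hz).continuousWithinAt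
  have hderiv : ∀ z ∈ Set.Ioo a b, HasDerivAt F (f z) z := fun z hz =>
    (hF z ⟨hz.1.le, hz.2.le⟩).hasDerivAt (Icc_mem_nhds hz.1 hz.2)
  rcases lt_trichotomy x y with hxy | hxy | hxy
  · have hsub : Set.Icc x y ⊆ Set.Icc a b := Set.Icc_subset_Icc hx.1 hy.2
    have hsub2 : Set.Ioo x y ⊆ Set.Ioo a b := fun z hz =>
      ⟨lt_of_le_of_lt hx.1 hz.1, lt_of_lt_of_le hz.2 hy.2⟩
    obtain ⟨ξ, hξ, hslope⟩ := exists_hasDerivAt_eq_slope F f hxy (hcont.mono hsub)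
      (fun z hz => hderiv z (hsub2 hz))
    refine ⟨ξ, ?_, ?_, ?_⟩
    · rw [Set.uIcc_of_le hxy.le]; exact ⟨hξ.1.le, hξ.2.le⟩
    · rw [abs_of_nonneg (by linarith [hξ.1] : (0:ℝ) ≤ ξ - x),
        abs_of_nonneg (by linarith : (0:ℝ) ≤ y - x)]
      linarith [hξ.2]
    · rw [eq_div_iff (sub_ne_zero.2 hxy.ne')] at hslope
      linear_combination -hslope
  · exact ⟨x, Set.left_mem_uIcc, by simp [hxy], by rw [hxy]; ring⟩
  · have hsub : Set.Icc y x ⊆ Set.Icc a b := Set.Icc_subset_Icc hy.1 hx.2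
    have hsub2 : Set.Ioo y x ⊆ Set.Ioo a b := fun z hz =>
      ⟨lt_of_le_of_lt hy.1 hz.1, lt_of_lt_of_le hz.2 hx.2⟩
    obtain ⟨ξ, hξ, hslope⟩ := exists_hasDerivAt_eq_slope F f hxy (hcont.mono hsub)
      (fun z hz => hderiv z (hsub2 hz))
    refine ⟨ξ, ?_, ?_, ?_⟩
    · rw [Set.uIcc_of_ge hxy.le]; exact ⟨hξ.1.le, hξ.2.le⟩
    · rw [abs_of_nonpos (by linarith [hξ.2] : ξ - x ≤ 0),
        abs_of_nonpos (by linarith : y - x ≤ 0)]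
      linarith [hξ.1]
    · rw [eq_div_iff (sub_ne_zero.2 hxy.ne')] at hslope
      linear_combination hslope

private lemma shift_integral_bound {Qc : ℝ → ℝ} (hm : Monotone Qc) {c d ε : ℝ}
    (hε : 0 < ε) (hcd : c + ε ≤ d - ε) :
    ∫ s in Set.Ioo c d, (Qc (s + ε) - Qc (s - ε)) ≤ 2 * ε * (Qc (d + ε) - Qc (c - ε)) := by
  have hcd' : c ≤ d := by linarith
  have hint1 : IntervalIntegrable (fun s => Qc (s + ε)) volume c d :=
    (hm.comp (fun u v huv => by simp [add_le_add_right huv ε, huv] : Monotone (fun s : ℝ => s + ε))).intervalIntegrable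
  have hint2 : IntervalIntegrable (fun s => Qc (s - ε)) volume c d :=
    (hm.comp (fun u v huv => by simpa using sub_le_sub_right huv ε : Monotone (fun s : ℝ => s - ε))).intervalIntegrable
  have heq : ∫ s in Set.Ioo c d, (Qc (s + ε) - Qc (s - ε))
      = (∫ s in c..d, Qc (s + ε)) - ∫ s in c..d, Qc (s - ε) := by
    rw [intervalIntegral.integral_of_le hcd', intervalIntegral.integral_of_le hcd',
      MeasureTheory.integral_Ioc_eq_integral_Ioo, MeasureTheory.integral_Ioc_eq_integral_Ioo]
    exact MeasureTheory.integral_sub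
      ((intervalIntegrable_iff_integrableOn_Ioo_of_le hcd').1 hint1)
      ((intervalIntegrable_iff_integrableOn_Ioo_of_le hcd').1 hint2)
  rw [heq]
  have e1 : ∫ s in c..d, Qc (s + ε) = ∫ s in (c+ε)..(d+ε), Qc s :=
    intervalIntegral.integral_comp_add_right Qc ε
  have e2 : ∫ s in c..d, Qc (s - ε) = ∫ s in (c-ε)..(d-ε), Qc s := by
    simpa [sub_eq_add_neg] using intervalIntegral.integral_comp_add_right Qc (-ε)
  have hQint : ∀ u v : ℝ, IntervalIntegrable Qc volume u v := fun u v => hm.intervalIntegrable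
  have s1 : ∫ s in (c+ε)..(d+ε), Qc s
      = (∫ s in (c+ε)..(d-ε), Qc s) + ∫ s in (d-ε)..(d+ε), Qc s :=
    (intervalIntegral.integral_add_adjacent_intervals (hQint _ _) (hQint _ _)).symm
  have s2 : ∫ s in (c-ε)..(d-ε), Qc s
      = (∫ s in (c-ε)..(c+ε), Qc s) + ∫ s in (c+ε)..(d-ε), Qc s :=
    (intervalIntegral.integral_add_adjacent_intervals (hQint _ _) (hQint _ _)).symm
  have b1 : ∫ s in (d-ε)..(d+ε), Qc s ≤ 2 * ε * Qc (d + ε) := by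
    have h := intervalIntegral.integral_mono_on (by linarith : d - ε ≤ d + ε) (hQint _ _)
      (intervalIntegrable_const (c := Qc (d + ε))) (fun x hx => hm hx.2)
    rw [intervalIntegral.integral_const, smul_eq_mul] at h
    refine h.trans (le_of_eq ?_)
    ring
  have b2 : 2 * ε * Qc (c - ε) ≤ ∫ s in (c-ε)..(c+ε), Qc s := by
    have h := intervalIntegral.integral_mono_on (by linarith : c - ε ≤ c + ε)
      (intervalIntegrable_const (c := Qc (c - ε))) (hQint _ _) (fun x hx => hm hx.1)
    rw [intervalIntegral.integral_const, smul_eq_mul] at h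
    refine le_trans (le_of_eq ?_) h
    ring
  rw [e1, e2, s1, s2]
  linarith [b1, b2]

set_option maxHeartbeats 2000000 in
/-- Hadamard differentiability of the inversion functional `F ↦ F⁻¹` into `L¹(0,1)`:
if `F` is a continuously differentiable distribution function on `[a,b]` of a measure
concentrated on `(a,b]` with derivative `f > 0` on `(a,b)`, `hₙ → h` uniformly on `[a,b]`
with `h` continuous, `tₙ → 0`, `tₙ ≠ 0`, and each `F + tₙ hₙ` is again such a distribution
function, then `((F + tₙ hₙ)⁻¹ - F⁻¹)/tₙ → -(h/f) ∘ F⁻¹` in `L¹(0,1)`. -/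
theorem stmt16 (a b : ℝ) (hab : a < b) (F f : ℝ → ℝ)
    (hFmono : MonotoneOn F (Set.Icc a b)) (hFa : F a = 0) (hFb : F b = 1)
    (hFrc : ∀ x ∈ Set.Ico a b, ContinuousWithinAt F (Set.Ici x) x)
    (hfcont : ContinuousOn f (Set.Icc a b))
    (hFderiv : ∀ x ∈ Set.Icc a b, HasDerivWithinAt F (f x) (Set.Icc a b) x)
    (hfpos : ∀ x ∈ Set.Ioo a b, 0 < f x)
    (h : ℝ → ℝ) (hhcont : ContinuousOn h (Set.Icc a b))
    (hn : ℕ → ℝ → ℝ)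
    (hunif : TendstoUniformlyOn hn h atTop (Set.Icc a b))
    (tn : ℕ → ℝ) (htn0 : ∀ n, tn n ≠ 0) (htn : Tendsto tn atTop (nhds 0))
    (hdf : ∀ n, MonotoneOn (fun x => F x + tn n * hn n x) (Set.Icc a b)
      ∧ F a + tn n * hn n a = 0 ∧ F b + tn n * hn n b = 1
      ∧ ∀ x ∈ Set.Ico a b,
          ContinuousWithinAt (fun y => F y + tn n * hn n y) (Set.Ici x) x) :
    Tendsto (fun n => ∫ s in Set.Ioo (0 : ℝ) 1,
        |(sInf {x | x ∈ Set.Icc a b ∧ s ≤ F x + tn n * hn n x}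
            - sInf {x | x ∈ Set.Icc a b ∧ s ≤ F x}) / tn n
          - (-(h (sInf {x | x ∈ Set.Icc a b ∧ s ≤ F x})
              / f (sInf {x | x ∈ Set.Icc a b ∧ s ≤ F x})))|)
      atTop (nhds 0) := by
  classical
  have h0 : a ≤ b := hab.le
  have hFcont : ContinuousOn F (Set.Icc a b) := fun x hx => (hFderiv x hx).continuousWithinAt
  have hFsm : StrictMonoOn F (Set.Icc a b) := by
    apply strictMonoOn_of_deriv_pos (convex_Icc a b) hFcont
    intro x hx
    rw [interior_Icc] at hx
    rw [((hFderiv x ⟨hx.1.le, hx.2.le⟩).hasDerivAt (Icc_mem_nhds hx.1 hx.2)).deriv]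
    exact hfpos x hx
  set Fn : ℕ → ℝ → ℝ := fun n x => F x + tn n * hn n x with hFndef
  set Qc : ℝ → ℝ := fun u => qtl a b F (min 1 u) with hQcdef
  set QN : ℕ → ℝ → ℝ := fun n u => qtl a b (Fn n) (min 1 u) with hQNdef
  have hFb1 : ∀ u : ℝ, min 1 u ≤ F b := fun u => by rw [hFb]; exact min_le_left _ _
  have hFnb1 : ∀ n, ∀ u : ℝ, min 1 u ≤ Fn n b := fun n u => by
    rw [show Fn n b = 1 from (hdf n).2.2.1]; exact min_le_left _ _
  have hQc_mono : Monotone Qc := qtl_mono h0 hFb1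
  have hQc_spec : ∀ u : ℝ, Qc u ∈ Set.Icc a b ∧ min 1 u ≤ F (Qc u) :=
    fun u => qtl_spec h0 (hFb1 u) hFrc
  have hQN_mono : ∀ n, Monotone (QN n) := fun n => qtl_mono h0 (hFnb1 n)
  have hQN_spec : ∀ n, ∀ u : ℝ, QN n u ∈ Set.Icc a b ∧ min 1 u ≤ Fn n (QN n u) :=
    fun n u => qtl_spec h0 (hFnb1 n u) (hdf n).2.2.2
  -- value of F at the quantile
  have hQc_eq : ∀ s : ℝ, 0 ≤ s → s ≤ 1 → F (Qc s) = s := by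
    intro s hs0 hs1
    obtain ⟨x₀, hx₀, hFx₀⟩ : ∃ x₀ ∈ Set.Icc a b, F x₀ = s := by
      have := intermediate_value_Icc h0 hFcont (by rw [hFa, hFb]; exact ⟨hs0, hs1⟩)
      obtain ⟨x₀, hx₀, hFx₀⟩ := this
      exact ⟨x₀, hx₀, hFx₀⟩
    have hmin : min 1 s = s := min_eq_right hs1
    have hle : Qc s ≤ x₀ := csInf_le (qtl_bddBelow a b F _) ⟨hx₀, by rw [hmin, hFx₀]⟩
    have hge : x₀ ≤ Qc s := by
      refine le_csInf ⟨b, ⟨⟨h0, le_rfl⟩, hFb1 s⟩⟩ ?_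
      intro y hy
      have : F x₀ ≤ F y := by rw [hFx₀]; exact le_trans (le_of_eq hmin.symm) hy.2
      exact (hFsm.le_iff_le hx₀ hy.1).1 this
    rw [le_antisymm hle hge, hFx₀]
  have hQc0 : ∀ u : ℝ, u ≤ 0 → Qc u = a := by
    intro u hu
    have hset : {x | x ∈ Set.Icc a b ∧ min 1 u ≤ F x} = Set.Icc a b := by
      ext x
      simp only [Set.mem_setOf_eq, and_iff_left_iff_imp]
      intro hx
      calc min 1 u ≤ u := min_le_right _ _
        _ ≤ 0 := hu
        _ = F a := hFa.symm
        _ ≤ F x := hFmono ⟨le_rfl, h0⟩ hx hx.1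
    show qtl a b F (min 1 u) = a
    rw [qtl, hset, csInf_Icc h0]
  have hQc1 : ∀ u : ℝ, 1 ≤ u → Qc u = b := by
    intro u hu
    have hmin : min 1 u = (1:ℝ) := min_eq_left hu
    have h1 : F (Qc u) = 1 := by
      have h2 := (hQc_spec u).2
      rw [hmin] at h2
      exact le_antisymm (hFb ▸ hFmono (hQc_spec u).1 ⟨h0, le_rfl⟩ (hQc_spec u).1.2) h2
    exact hFsm.injOn (hQc_spec u).1 ⟨h0, le_rfl⟩ (by rw [h1, hFb])
  have hQcIoo : ∀ s ∈ Set.Ioo (0:ℝ) 1, Qc s ∈ Set.Ioo a b := by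
    intro s hs
    have hF := hQc_eq s hs.1.le hs.2.le
    have hmem := (hQc_spec s).1
    constructor
    · rcases eq_or_lt_of_le hmem.1 with he | hlt
      · exfalso; rw [← he, hFa] at hF; linarith [hs.1]
      · exact hlt
    · rcases eq_or_lt_of_le hmem.2 with he | hlt
      · exfalso; rw [he, hFb] at hF; linarith [hs.2]
      · exact hlt
  -- bound for h
  obtain ⟨Ch, hCh0, hCh⟩ : ∃ C : ℝ, 0 ≤ C ∧ ∀ x ∈ Set.Icc a b, |h x| ≤ C := by
    obtain ⟨C, hC⟩ := (isCompact_Icc (a := a) (b := b)).exists_bound_of_continuousOn hhcont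
    exact ⟨max C 0, le_max_right _ _, fun x hx =>
      le_trans (by rw [← Real.norm_eq_abs]; exact hC x hx) (le_max_left _ _)⟩
  set C0 : ℝ := Ch + 1 with hC0def
  have hC0pos : 0 < C0 := by positivity
  have hbnd_ev : ∀ e : ℝ, 0 < e → ∀ᶠ n in atTop, ∀ x ∈ Set.Icc a b, |hn n x - h x| ≤ e := by
    rw [Metric.tendstoUniformlyOn_iff] at hunif
    intro e he
    filter_upwards [hunif e he] with n hne x hx
    rw [abs_sub_comm, ← Real.dist_eq]
    exact (hne x hx).le
  have hC0_ev : ∀ᶠ n in atTop, ∀ x ∈ Set.Icc a b, |hn n x| ≤ C0 := by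
    filter_upwards [hbnd_ev 1 one_pos] with n hne x hx
    calc |hn n x| ≤ |hn n x - h x| + |h x| := by
          have := abs_sub_abs_le_abs_sub (hn n x) (h x); linarith [abs_sub_abs_le_abs_sub (hn n x) (h x)]
      _ ≤ 1 + Ch := add_le_add (hne x hx) (hCh x hx)
      _ = C0 := by rw [hC0def]; ring
  clear_value C0
  -- central estimates
  have hEST1 : ∀ n, ∀ s ∈ Set.Ioo (0:ℝ) 1, ∀ e : ℝ, 0 ≤ e →
      (∀ x ∈ Set.Icc a b, |hn n x - h x| ≤ e) →
      a < QN n s ∧ |F (QN n s) - s + tn n * h (QN n s)| ≤ |tn n| * e := by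
    intro n s hs e he hb
    have hmin : min 1 s = s := min_eq_right hs.2.le
    have hspec := hQN_spec n s
    have hsF : s ≤ Fn n (QN n s) := by have h' := hspec.2; rw [hmin] at h'; exact h'
    have hqa : a < QN n s := by
      rcases eq_or_lt_of_le hspec.1.1 with he' | h'
      · exfalso
        have h1 : s ≤ Fn n a := by rw [he']; exact hsF
        simp only [hFndef] at h1
        rw [(hdf n).2.1] at h1
        linarith [hs.1]
      · exact h'
    have hlt : ∀ y ∈ Set.Ico a (QN n s), Fn n y < s := by
      intro y hy
      have hyI : y ∈ Set.Icc a b := ⟨hy.1, hy.2.le.trans hspec.1.2⟩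
      have := qtl_lt hyI (show y < qtl a b (Fn n) (min 1 s) from hy.2)
      rw [hmin] at this
      exact this
    have habs : ∀ y ∈ Set.Icc a b, |tn n * (h y - hn n y)| ≤ |tn n| * e := by
      intro y hy
      rw [abs_mul]
      exact mul_le_mul_of_nonneg_left (by rw [abs_sub_comm]; exact hb y hy) (abs_nonneg _)
    have hup : ∀ y ∈ Set.Ico a (QN n s), F y + tn n * h y ≤ s + |tn n| * e := by
      intro y hy
      have hyI : y ∈ Set.Icc a b := ⟨hy.1, hy.2.le.trans hspec.1.2⟩
      have h1 : F y + tn n * hn n y < s := hlt y hy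
      have h2 := (abs_le.1 (habs y hyI)).2
      nlinarith [h2]
    have hcont2 : ContinuousWithinAt (fun y => F y + tn n * h y)
        (Set.Ico a (QN n s)) (QN n s) := by
      refine ContinuousWithinAt.mono ?_ (fun y hy => (⟨hy.1, hy.2.le.trans hspec.1.2⟩ : y ∈ Set.Icc a b))
      exact (hFcont.add (continuousOn_const.mul hhcont)) _ hspec.1
    have hup2 : F (QN n s) + tn n * h (QN n s) ≤ s + |tn n| * e :=
      le_of_left_lim (ψ := fun y => F y + tn n * h y) hqa hcont2 hup
    have hlow : s - |tn n| * e ≤ F (QN n s) + tn n * h (QN n s) := by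
      have h2 := (abs_le.1 (habs (QN n s) hspec.1)).1
      have h3 : s ≤ F (QN n s) + tn n * hn n (QN n s) := hsF
      nlinarith [h2]
    exact ⟨hqa, abs_le.2 ⟨by linarith, by linarith⟩⟩
  have hEST2 : ∀ n, ∀ s ∈ Set.Ioo (0:ℝ) 1, ∀ C : ℝ,
      (∀ x ∈ Set.Icc a b, |hn n x| ≤ C) →
      Qc (s - |tn n| * C) ≤ QN n s ∧ QN n s ≤ Qc (s + |tn n| * C) := by
    intro n s hs C hb
    have hC0' : 0 ≤ C := le_trans (abs_nonneg _) (hb a ⟨le_rfl, h0⟩)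
    have hmin : min 1 s = s := min_eq_right hs.2.le
    have hspec := hQN_spec n s
    have hsF : s ≤ Fn n (QN n s) := by have h' := hspec.2; rw [hmin] at h'; exact h'
    have hqa : a < QN n s := by
      rcases eq_or_lt_of_le hspec.1.1 with he' | h'
      · exfalso
        have h1 : s ≤ Fn n a := by rw [he']; exact hsF
        simp only [hFndef] at h1
        rw [(hdf n).2.1] at h1
        linarith [hs.1]
      · exact h'
    have habs : ∀ y ∈ Set.Icc a b, |tn n * hn n y| ≤ |tn n| * C := by
      intro y hy
      rw [abs_mul]
      exact mul_le_mul_of_nonneg_left (hb y hy) (abs_nonneg _)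
    have hlow : s - |tn n| * C ≤ F (QN n s) := by
      have h2 := (abs_le.1 (habs (QN n s) hspec.1)).2
      have h3 : s ≤ F (QN n s) + tn n * hn n (QN n s) := hsF
      nlinarith [h2]
    have hup : F (QN n s) ≤ s + |tn n| * C := by
      refine le_of_left_lim (ψ := F) hqa ((hFcont _ hspec.1).mono
        (fun y hy => (⟨hy.1, hy.2.le.trans hspec.1.2⟩ : y ∈ Set.Icc a b))) ?_
      intro y hy
      have hyI : y ∈ Set.Icc a b := ⟨hy.1, hy.2.le.trans hspec.1.2⟩
      have h1 : F y + tn n * hn n y < s := by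
        have := qtl_lt hyI (show y < qtl a b (Fn n) (min 1 s) from hy.2)
        rw [hmin] at this
        exact this
      have h2 := (abs_le.1 (habs y hyI)).1
      nlinarith [h2]
    constructor
    · rcases le_or_gt (s - |tn n| * C) 0 with hc | hc
      · rw [hQc0 _ hc]; exact hspec.1.1
      · have hIcc : s - |tn n| * C ≤ 1 := by nlinarith [hs.2, abs_nonneg (tn n)]
        have hFQ : F (Qc (s - |tn n| * C)) = s - |tn n| * C := hQc_eq _ hc.le hIcc
        refine (hFsm.le_iff_le (hQc_spec _).1 hspec.1).1 ?_
        rw [hFQ]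
        exact hlow
    · rcases le_or_gt 1 (s + |tn n| * C) with hc | hc
      · rw [hQc1 _ hc]; exact hspec.1.2
      · have hc0 : 0 ≤ s + |tn n| * C := by nlinarith [hs.1, abs_nonneg (tn n)]
        have hFQ : F (Qc (s + |tn n| * C)) = s + |tn n| * C := hQc_eq _ hc0 hc.le
        refine (hFsm.le_iff_le hspec.1 (hQc_spec _).1).1 ?_
        rw [hFQ]
        exact hup
  -- the limit function
  set g : ℝ → ℝ := fun s => -(h (Qc s) / f (Qc s)) with hgdef
  set gn : ℕ → ℝ → ℝ := fun n s => (QN n s - Qc s) / tn n with hgndef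
  -- pointwise convergence
  have htnC0 : Tendsto (fun n => |tn n| * C0) atTop (nhds 0) := by
    have := (htn.abs).mul_const C0
    simpa using this
  have hPT : ∀ s ∈ Set.Ioo (0:ℝ) 1, Tendsto (fun n => gn n s) atTop (nhds (g s)) := by
    intro s hs
    set x : ℝ := Qc s with hxdef
    have hxIcc : x ∈ Set.Icc a b := (hQc_spec s).1
    have hxIoo : x ∈ Set.Ioo a b := hQcIoo s hs
    have hFx : F x = s := hQc_eq s hs.1.le hs.2.le
    -- convergence of QN n s to x
    have hQNconv : Tendsto (fun n => QN n s) atTop (nhds x) := by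
      rw [Metric.tendsto_atTop]
      intro δ hδ
      obtain ⟨x', hx'1, hx'2⟩ := exists_between (lt_min hxIoo.2 (lt_add_of_pos_right x hδ))
      obtain ⟨x'', hx''1, hx''2⟩ := exists_between (max_lt hxIoo.1 (sub_lt_self x hδ))
      have hx'I : x' ∈ Set.Icc a b :=
        ⟨hxIcc.1.trans hx'1.le, (hx'2.trans_le (min_le_left _ _)).le⟩
      have hx''I : x'' ∈ Set.Icc a b := ⟨(lt_of_le_of_lt (le_max_left _ _) hx''1).le, (hx''2.trans_le hxIcc.2).le⟩
      have hρpos : 0 < F x' - s := by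
        rw [← hFx]; exact sub_pos.2 (hFsm hxIcc hx'I hx'1)
      have hρ'pos : 0 < s - F x'' := by
        rw [← hFx]; exact sub_pos.2 (hFsm hx''I hxIcc hx''2)
      have hQx' : Qc (F x') = x' := by
        have hF01 : F x' ∈ Set.Icc (0:ℝ) 1 := by
          constructor
          · rw [← hFa]; exact hFmono ⟨le_rfl, h0⟩ hx'I hx'I.1
          · rw [← hFb]; exact hFmono hx'I ⟨h0, le_rfl⟩ hx'I.2
        exact hFsm.injOn (hQc_spec _).1 hx'I (hQc_eq _ hF01.1 hF01.2)
      have hQx'' : Qc (F x'') = x'' := by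
        have hF01 : F x'' ∈ Set.Icc (0:ℝ) 1 := by
          constructor
          · rw [← hFa]; exact hFmono ⟨le_rfl, h0⟩ hx''I hx''I.1
          · rw [← hFb]; exact hFmono hx''I ⟨h0, le_rfl⟩ hx''I.2
        exact hFsm.injOn (hQc_spec _).1 hx''I (hQc_eq _ hF01.1 hF01.2)
      have hev : ∀ᶠ n in atTop, |tn n| * C0 < min (F x' - s) (s - F x'') ∧
          ∀ y ∈ Set.Icc a b, |hn n y| ≤ C0 := by
        filter_upwards [htnC0.eventually_lt_const (lt_min hρpos hρ'pos), hC0_ev] with n h1 h2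
        exact ⟨h1, h2⟩
      rw [eventually_atTop] at hev
      obtain ⟨N, hN⟩ := hev
      refine ⟨N, fun n hn' => ?_⟩
      obtain ⟨h1, h2⟩ := hN n hn'
      obtain ⟨hsand1, hsand2⟩ := hEST2 n s hs C0 h2
      have hub : QN n s ≤ x' := by
        calc QN n s ≤ Qc (s + |tn n| * C0) := hsand2
          _ ≤ Qc (F x') := hQc_mono (by have := lt_of_lt_of_le h1 (min_le_left _ _); linarith)
          _ = x' := hQx'
      have hlb : x'' ≤ QN n s := by
        calc x'' = Qc (F x'') := hQx''.symm
          _ ≤ Qc (s - |tn n| * C0) := hQc_mono (by have := lt_of_lt_of_le h1 (min_le_right _ _); linarith)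
          _ ≤ QN n s := hsand1
      rw [Real.dist_eq, abs_lt]
      constructor
      · have : x - δ < x'' := lt_of_le_of_lt (le_max_right _ _) hx''1
        linarith
      · have : x' < x + δ := lt_of_lt_of_le hx'2 (min_le_right _ _)
        linarith
    -- mean value points
    have hxi : ∀ n, ∃ ξ ∈ Set.uIcc x (QN n s), |ξ - x| ≤ |QN n s - x| ∧
        F (QN n s) - F x = f ξ * (QN n s - x) :=
      fun n => mvt_pair hFderiv hxIcc (hQN_spec n s).1
    choose ξ hξmem hξabs hξeq using hxi
    have hdist0 : Tendsto (fun n => |QN n s - x|) atTop (nhds 0) := by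
      have := (tendsto_sub_nhds_zero_iff.2 hQNconv).abs
      simpa using this
    have hξconv : Tendsto ξ atTop (nhds x) := by
      refine tendsto_sub_nhds_zero_iff.1 (squeeze_zero_norm (fun n => ?_) hdist0)
      rw [Real.norm_eq_abs]
      exact hξabs n
    have hfx : ContinuousAt f x := (hfcont x hxIcc).continuousAt (Icc_mem_nhds hxIoo.1 hxIoo.2)
    have hfξ : Tendsto (fun n => f (ξ n)) atTop (nhds (f x)) := hfx.tendsto.comp hξconv
    have hhx : ContinuousAt h x := (hhcont x hxIcc).continuousAt (Icc_mem_nhds hxIoo.1 hxIoo.2)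
    have hhQN : Tendsto (fun n => h (QN n s)) atTop (nhds (h x)) := hhx.tendsto.comp hQNconv
    have hfx0 : f x ≠ 0 := (hfpos x hxIoo).ne'
    have hrn : Tendsto (fun n => (F (QN n s) - s + tn n * h (QN n s)) / tn n) atTop (nhds 0) := by
      rw [NormedAddCommGroup.tendsto_nhds_zero]
      intro ε hε
      filter_upwards [hbnd_ev (ε/2) (by positivity)] with n hb
      have := (hEST1 n s hs (ε/2) (by positivity) hb).2
      rw [Real.norm_eq_abs, abs_div]
      rw [div_lt_iff₀ (abs_pos.2 (htn0 n))]
      calc |F (QN n s) - s + tn n * h (QN n s)| ≤ |tn n| * (ε/2) := this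
        _ < ε * |tn n| := by
          have := abs_pos.2 (htn0 n)
          nlinarith
    have hkey : Tendsto (fun n => ((F (QN n s) - s + tn n * h (QN n s)) / tn n - h (QN n s)) / f (ξ n))
        atTop (nhds ((0 - h x) / f x)) := (hrn.sub hhQN).div hfξ hfx0
    have heq : ∀ᶠ n in atTop, ((F (QN n s) - s + tn n * h (QN n s)) / tn n - h (QN n s)) / f (ξ n)
        = gn n s := by
      filter_upwards [hfξ.eventually_ne hfx0] with n hfne
      have he1 := hξeq n
      rw [hFx] at he1
      have e2 : (F (QN n s) - s + tn n * h (QN n s)) / tn n - h (QN n s)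
          = (F (QN n s) - s) / tn n := by
        rw [add_div, mul_div_cancel_left₀ _ (htn0 n)]; ring
      rw [e2, he1, div_div, mul_comm (tn n) (f (ξ n)), mul_div_mul_left _ _ hfne]
    have : Tendsto (fun n => gn n s) atTop (nhds ((0 - h x) / f x)) := hkey.congr' heq
    rw [show (0 - h x) / f x = -(h x / f x) by ring] at this
    exact this
  -- measurability
  have hQcmeas : Measurable Qc := (qtl_mono h0 hFb1).measurable
  have hQNmeas : ∀ n, Measurable (QN n) := fun n => (qtl_mono h0 (hFnb1 n)).measurable
  have hgnmeas : ∀ n, Measurable (gn n) := fun n => ((hQNmeas n).sub hQcmeas).div_const _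
  have hgmeas : Measurable g := by
    have hQmk : Measurable (fun u => (⟨Qc u, (hQc_spec u).1⟩ : Set.Icc a b)) :=
      hQcmeas.subtype_mk
    have hh' : Measurable (fun u => h (Qc u)) :=
      ((continuousOn_iff_continuous_restrict.1 hhcont).measurable).comp hQmk
    have hf' : Measurable (fun u => f (Qc u)) :=
      ((continuousOn_iff_continuous_restrict.1 hfcont).measurable).comp hQmk
    exact (hh'.div hf').neg
  -- integrability of gn
  have hvol1 : volume (Set.Ioo (0:ℝ) 1) < ⊤ := by
    rw [Real.volume_Ioo]; exact ENNReal.ofReal_lt_top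
  have int_bdd : ∀ (φ : ℝ → ℝ) (M : ℝ) (S : Set ℝ), volume S < ⊤ → Measurable φ →
      (∀ s, |φ s| ≤ M) → IntegrableOn φ S := by
    intro φ M S hS hφ hM
    refine Integrable.mono' (g := fun _ => M) (integrableOn_const hS.ne)
      hφ.aestronglyMeasurable ?_
    exact Filter.Eventually.of_forall fun s => (Real.norm_eq_abs _ ▸ hM s)
  have habs_sub : ∀ n, ∀ s : ℝ, |QN n s - Qc s| ≤ b - a := by
    intro n s
    have h1 := (hQN_spec n s).1
    have h2 := (hQc_spec s).1
    rw [abs_le]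
    constructor <;> [linarith [h1.1, h2.2]; linarith [h1.2, h2.1]]
  have int_gn : ∀ n, IntegrableOn (gn n) (Set.Ioo (0:ℝ) 1) := by
    intro n
    refine int_bdd _ ((b - a) / |tn n|) _ hvol1 (hgnmeas n) ?_
    intro s
    rw [hgndef]
    rw [abs_div]
    gcongr
    exact habs_sub n s
  -- tail bound for gn
  have tail_gn : ∀ n, ∀ c d : ℝ, 0 ≤ c → d ≤ 1 →
      (∀ x ∈ Set.Icc a b, |hn n x| ≤ C0) →
      c + |tn n| * C0 ≤ d - |tn n| * C0 →
      ∫ s in Set.Ioo c d, |gn n s| ≤ 2 * C0 * (Qc (d + |tn n| * C0) - Qc (c - |tn n| * C0)) := by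
    intro n c d hc hd hb hcd
    have ht : |tn n| ≠ 0 := abs_ne_zero.mpr (htn0 n)
    have htpos : 0 < |tn n| := abs_pos.2 (htn0 n)
    set ε := |tn n| * C0 with hεdef
    have hεpos : 0 < ε := mul_pos htpos hC0pos
    have hsub : Set.Ioo c d ⊆ Set.Ioo (0:ℝ) 1 := Set.Ioo_subset_Ioo hc hd
    have hpw : ∀ s ∈ Set.Ioo c d, |gn n s| ≤ (Qc (s + ε) - Qc (s - ε)) / |tn n| := by
      intro s hss
      have hs1 : s ∈ Set.Ioo (0:ℝ) 1 := hsub hss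
      obtain ⟨h1, h2⟩ := hEST2 n s hs1 C0 hb
      have h3 : Qc (s - ε) ≤ Qc s := hQc_mono (by linarith)
      have h4 : Qc s ≤ Qc (s + ε) := hQc_mono (by linarith)
      rw [hgndef, abs_div]
      gcongr
      rw [abs_le]
      exact ⟨by linarith, by linarith⟩
    have hQcIcc : ∀ u : ℝ, Qc u ∈ Set.Icc a b := fun u => (hQc_spec u).1
    have int_rhs : IntegrableOn (fun s => (Qc (s + ε) - Qc (s - ε)) / |tn n|)
        (Set.Ioo c d) := by
      refine int_bdd _ ((b - a) / |tn n|) _ (by rw [Real.volume_Ioo]; exact ENNReal.ofReal_lt_top)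
        (((hQcmeas.comp (measurable_add_const ε)).sub
          (hQcmeas.comp (measurable_add_const (-ε)))).div_const _) ?_
      intro s
      rw [abs_div, abs_abs]
      gcongr
      rw [abs_le]
      have q1 := hQcIcc (s + ε)
      have q2 := hQcIcc (s - ε)
      exact ⟨by linarith [q1.1, q2.2], by linarith [q1.2, q2.1]⟩
    calc ∫ s in Set.Ioo c d, |gn n s|
        ≤ ∫ s in Set.Ioo c d, (Qc (s + ε) - Qc (s - ε)) / |tn n| :=
          setIntegral_mono_on ((int_gn n).mono_set hsub).abs int_rhs measurableSet_Ioo hpw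
      _ = (∫ s in Set.Ioo c d, (Qc (s + ε) - Qc (s - ε))) / |tn n| := by
          rw [MeasureTheory.integral_div]
      _ ≤ (2 * ε * (Qc (d + ε) - Qc (c - ε))) / |tn n| := by
          gcongr
          exact shift_integral_bound hQc_mono hεpos hcd
      _ = 2 * C0 * (Qc (d + ε) - Qc (c - ε)) := by
          rw [hεdef]
          field_simp
  -- integrability of g
  have htotal_gn : ∀ᶠ n in atTop, ∫ s in Set.Ioo (0:ℝ) 1, |gn n s| ≤ 2 * C0 * (b - a) := by
    filter_upwards [hC0_ev, htnC0.eventually_lt_const (by norm_num : (0:ℝ) < 1/4)] with n h1 h2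
    have h2' : |tn n| * C0 < 1/4 := h2
    have hcd : 0 + |tn n| * C0 ≤ 1 - |tn n| * C0 := by linarith
    have := tail_gn n 0 1 le_rfl le_rfl h1 hcd
    have he1 : Qc (1 + |tn n| * C0) = b :=
      hQc1 _ (by nlinarith [mul_nonneg (abs_nonneg (tn n)) hC0pos.le])
    have he2 : Qc (0 - |tn n| * C0) = a :=
      hQc0 _ (by nlinarith [mul_nonneg (abs_nonneg (tn n)) hC0pos.le])
    rw [he1, he2] at this
    exact this
  have hg_int : IntegrableOn g (Set.Ioo (0:ℝ) 1) := by
    refine ⟨hgmeas.aestronglyMeasurable, ?_⟩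
    rw [hasFiniteIntegral_def]
    have hae : ∀ᵐ s ∂(volume.restrict (Set.Ioo (0:ℝ) 1)),
        ‖g s‖ₑ = liminf (fun n => ‖gn n s‖ₑ) atTop := by
      filter_upwards [ae_restrict_mem measurableSet_Ioo] with s hs
      exact ((ENNReal.tendsto_coe.2 (hPT s hs).nnnorm).liminf_eq).symm
    rw [lintegral_congr_ae hae]
    refine lt_of_le_of_lt (MeasureTheory.lintegral_liminf_le
      (fun n => ((hgnmeas n).enorm))) ?_
    have hbd : ∀ᶠ n in atTop,
        (∫⁻ s in Set.Ioo (0:ℝ) 1, ‖gn n s‖ₑ) ≤ ENNReal.ofReal (2 * C0 * (b - a)) := by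
      filter_upwards [htotal_gn] with n hb
      rw [← ofReal_integral_norm_eq_lintegral_enorm (int_gn n)]
      refine ENNReal.ofReal_le_ofReal ?_
      simpa [Real.norm_eq_abs] using hb
    refine lt_of_le_of_lt ?_ (show ENNReal.ofReal (2 * C0 * (b - a)) < ⊤ from ENNReal.ofReal_lt_top)
    calc liminf (fun n => ∫⁻ s in Set.Ioo (0:ℝ) 1, ‖gn n s‖ₑ) atTop
        ≤ limsup (fun n => ∫⁻ s in Set.Ioo (0:ℝ) 1, ‖gn n s‖ₑ) atTop :=
          liminf_le_limsup
      _ ≤ ENNReal.ofReal (2 * C0 * (b - a)) := limsup_le_of_le (h := hbd)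
  -- rewrite the goal
  have hinteq : (fun n => ∫ s in Set.Ioo (0 : ℝ) 1,
        |(sInf {x | x ∈ Set.Icc a b ∧ s ≤ F x + tn n * hn n x}
            - sInf {x | x ∈ Set.Icc a b ∧ s ≤ F x}) / tn n
          - (-(h (sInf {x | x ∈ Set.Icc a b ∧ s ≤ F x})
              / f (sInf {x | x ∈ Set.Icc a b ∧ s ≤ F x})))|)
      = fun n => ∫ s in Set.Ioo (0:ℝ) 1, |gn n s - g s| := by
    refine funext fun n => setIntegral_congr_fun measurableSet_Ioo fun s hs => ?_
    have hm : min 1 s = s := min_eq_right hs.2.le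
    simp only [hgndef, hgdef, hQNdef, hQcdef, hFndef, qtl, hm]
  rw [hinteq]
  have hQcF : ∀ x ∈ Set.Icc a b, Qc (F x) = x := by
    intro x hx
    have hF01 : F x ∈ Set.Icc (0:ℝ) 1 :=
      ⟨hFa ▸ hFmono ⟨le_rfl, h0⟩ hx hx.1, hFb ▸ hFmono hx ⟨h0, le_rfl⟩ hx.2⟩
    exact hFsm.injOn (hQc_spec _).1 hx (hQc_eq _ hF01.1 hF01.2)
  rw [NormedAddCommGroup.tendsto_nhds_zero]
  intro ε hε
  -- choice of η₁ (lower tail of gn)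
  have hδ1pos : 0 < ε / (10 * C0 + 1) := div_pos hε (by linarith)
  obtain ⟨η₁, hη₁pos, hη₁le, hη₁⟩ : ∃ η₁ > 0, η₁ ≤ 1/5 ∧ 2 * C0 * (Qc (2 * η₁) - a) < ε/5 := by
    obtain ⟨x₁, hx₁1, hx₁2⟩ := exists_between (lt_min hab (lt_add_of_pos_right a hδ1pos))
    have hx₁I : x₁ ∈ Set.Icc a b := ⟨hx₁1.le, (hx₁2.trans_le (min_le_left _ _)).le⟩
    have hFx₁ : 0 < F x₁ := by rw [← hFa]; exact hFsm ⟨le_rfl, h0⟩ hx₁I hx₁1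
    refine ⟨min (F x₁ / 2) (1/5), lt_min (half_pos hFx₁) (by norm_num), min_le_right _ _, ?_⟩
    have h2η : 2 * min (F x₁ / 2) (1/5) ≤ F x₁ := by
      have := min_le_left (F x₁ / 2) (1/5); linarith
    have hQle : Qc (2 * min (F x₁ / 2) (1/5)) ≤ x₁ := by
      calc Qc (2 * min (F x₁ / 2) (1/5)) ≤ Qc (F x₁) := hQc_mono h2η
        _ = x₁ := hQcF x₁ hx₁I
    have hx₁δ : x₁ - a < ε / (10 * C0 + 1) := by
      have := hx₁2.trans_le (min_le_right _ _); linarith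
    have hstep : 2 * C0 * (Qc (2 * min (F x₁ / 2) (1/5)) - a) ≤ 2 * C0 * (x₁ - a) := by
      gcongr
    have hlt : 2 * C0 * (x₁ - a) < 2 * C0 * (ε / (10 * C0 + 1)) :=
      mul_lt_mul_of_pos_left hx₁δ (by linarith)
    have h25 : 2 * C0 * (ε / (10 * C0 + 1)) ≤ ε/5 := by
      rw [← mul_div_assoc, div_le_div_iff₀ (by linarith) (by norm_num : (0:ℝ) < 5)]
      nlinarith [mul_pos hC0pos hε]
    exact lt_of_le_of_lt hstep (lt_of_lt_of_le hlt h25)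
  -- choice of η₂ (upper tail of gn)
  obtain ⟨η₂, hη₂pos, hη₂le, hη₂⟩ : ∃ η₂ > 0, η₂ ≤ 1/5 ∧ 2 * C0 * (b - Qc (1 - 2 * η₂)) < ε/5 := by
    obtain ⟨x₂, hx₂1, hx₂2⟩ := exists_between (max_lt hab (sub_lt_self b hδ1pos))
    have hx₂I : x₂ ∈ Set.Icc a b := ⟨((le_max_left a _).trans hx₂1.le), hx₂2.le⟩
    have hFx₂ : F x₂ < 1 := by rw [← hFb]; exact hFsm hx₂I ⟨h0, le_rfl⟩ hx₂2
    have hFx₂0 : 0 ≤ F x₂ := by rw [← hFa]; exact hFmono ⟨le_rfl, h0⟩ hx₂I hx₂I.1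
    refine ⟨min ((1 - F x₂) / 2) (1/5), lt_min (half_pos (by linarith)) (by norm_num),
      min_le_right _ _, ?_⟩
    have h2η : F x₂ ≤ 1 - 2 * min ((1 - F x₂) / 2) (1/5) := by
      have := min_le_left ((1 - F x₂) / 2) (1/5); linarith
    have hQge : x₂ ≤ Qc (1 - 2 * min ((1 - F x₂) / 2) (1/5)) := by
      calc x₂ = Qc (F x₂) := (hQcF x₂ hx₂I).symm
        _ ≤ Qc (1 - 2 * min ((1 - F x₂) / 2) (1/5)) := hQc_mono h2η
    have hx₂δ : b - x₂ < ε / (10 * C0 + 1) := by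
      have := (le_max_right a (b - ε / (10 * C0 + 1))).trans_lt hx₂1; linarith
    have hstep : 2 * C0 * (b - Qc (1 - 2 * min ((1 - F x₂) / 2) (1/5))) ≤ 2 * C0 * (b - x₂) := by
      gcongr
    have hlt : 2 * C0 * (b - x₂) < 2 * C0 * (ε / (10 * C0 + 1)) :=
      mul_lt_mul_of_pos_left hx₂δ (by linarith)
    have h25 : 2 * C0 * (ε / (10 * C0 + 1)) ≤ ε/5 := by
      rw [← mul_div_assoc, div_le_div_iff₀ (by linarith) (by norm_num : (0:ℝ) < 5)]
      nlinarith [mul_pos hC0pos hε]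
    exact lt_of_le_of_lt hstep (lt_of_lt_of_le hlt h25)
  -- choice of η₃ (both tails of g)
  obtain ⟨η₃, hη₃pos, hη₃le, hη₃l, hη₃u⟩ : ∃ η₃ > 0, η₃ ≤ 1/5 ∧
      (∫ s in Set.Ioo (0:ℝ) η₃, |g s|) < ε/5 ∧ (∫ s in Set.Ioo (1 - η₃) 1, |g s|) < ε/5 := by
    have hbound_int : Integrable (fun s => |g s|) (volume.restrict (Set.Ioo (0:ℝ) 1)) :=
      hg_int.abs
    have hk5 : ∀ k : ℕ, (0:ℝ) < 1 / (k + 5 : ℝ) := fun k => by positivity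
    have hk5le : ∀ k : ℕ, 1 / (k + 5 : ℝ) ≤ 1/5 := fun k => by
      rw [div_le_div_iff₀ (by positivity) (by norm_num)]
      have : (0:ℝ) ≤ (k:ℝ) := Nat.cast_nonneg k
      linarith
    have hgen : ∀ (Aset : ℕ → Set ℝ), (∀ k, MeasurableSet (Aset k)) →
        (∀ k, Aset k ⊆ Set.Ioo (0:ℝ) 1) →
        (∀ s ∈ Set.Ioo (0:ℝ) 1, ∀ᶠ k : ℕ in atTop, s ∉ Aset k) →
        Tendsto (fun k : ℕ => ∫ s in Aset k, |g s|) atTop (nhds 0) := by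
      intro Aset hAm hAsub hAev
      have hrw : ∀ k : ℕ, ∫ s in Aset k, |g s|
          = ∫ s in Set.Ioo (0:ℝ) 1, (Aset k).indicator (fun s => |g s|) s := by
        intro k
        rw [integral_indicator (hAm k), Measure.restrict_restrict_of_subset (hAsub k)]
      have hD : Tendsto (fun k : ℕ => ∫ s in Set.Ioo (0:ℝ) 1,
          (Aset k).indicator (fun s => |g s|) s) atTop
          (nhds (∫ _ in Set.Ioo (0:ℝ) 1, (0:ℝ))) := by
        apply tendsto_integral_of_dominated_convergence (bound := fun s => |g s|)
        · exact fun k => ((hgmeas.abs).indicator (hAm k)).aestronglyMeasurable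
        · exact hbound_int
        · intro k
          refine Filter.Eventually.of_forall fun s => ?_
          rw [Real.norm_eq_abs]
          by_cases hsA : s ∈ Aset k
          · rw [Set.indicator_of_mem hsA, abs_abs]
          · rw [Set.indicator_of_notMem hsA]
            simp [abs_nonneg]
        · filter_upwards [ae_restrict_mem measurableSet_Ioo] with s hs
          have hev : ∀ᶠ k : ℕ in atTop, (Aset k).indicator (fun s => |g s|) s = 0 := by
            filter_upwards [hAev s hs] with k hk
            exact Set.indicator_of_notMem hk _
          exact Tendsto.congr' (hev.mono fun k hk => hk.symm) tendsto_const_nhds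
      rw [integral_zero] at hD
      exact Tendsto.congr (fun k => (hrw k).symm) hD
    have T1 : Tendsto (fun k : ℕ => ∫ s in Set.Ioo (0:ℝ) (1/(k+5:ℝ)), |g s|) atTop (nhds 0) := by
      refine hgen _ (fun k => measurableSet_Ioo) (fun k => Set.Ioo_subset_Ioo le_rfl
        ((hk5le k).trans (by norm_num))) ?_
      intro s hs
      obtain ⟨N, hN⟩ := exists_nat_ge (1 / s)
      rw [eventually_atTop]
      refine ⟨N, fun k hk => ?_⟩
      intro hmem
      have h1 : 1 / s ≤ (k + 5 : ℝ) := by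
        have : (N:ℝ) ≤ (k:ℝ) := Nat.cast_le.2 hk
        linarith
      have h2 : 1 / (k + 5 : ℝ) ≤ s := by
        rw [div_le_iff₀ (by positivity)]
        have := (div_le_iff₀ hs.1).1 h1
        linarith
      exact absurd h2 (not_le.2 hmem.2)
    have T2 : Tendsto (fun k : ℕ => ∫ s in Set.Ioo (1 - 1/(k+5:ℝ)) 1, |g s|) atTop (nhds 0) := by
      refine hgen _ (fun k => measurableSet_Ioo) (fun k => Set.Ioo_subset_Ioo
        (by linarith [hk5le k]) le_rfl) ?_
      intro s hs
      obtain ⟨N, hN⟩ := exists_nat_ge (1 / (1 - s))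
      rw [eventually_atTop]
      refine ⟨N, fun k hk => ?_⟩
      intro hmem
      have hs1 : 0 < 1 - s := by linarith [hs.2]
      have h1 : 1 / (1 - s) ≤ (k + 5 : ℝ) := by
        have : (N:ℝ) ≤ (k:ℝ) := Nat.cast_le.2 hk
        linarith
      have h2 : 1 / (k + 5 : ℝ) ≤ 1 - s := by
        rw [div_le_iff₀ (by positivity)]
        have := (div_le_iff₀ hs1).1 h1
        linarith
      have := hmem.1
      linarith
    obtain ⟨k, hk1, hk2⟩ : ∃ k : ℕ, (∫ s in Set.Ioo (0:ℝ) (1/(k+5:ℝ)), |g s|) < ε/5 ∧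
        (∫ s in Set.Ioo (1 - 1/(k+5:ℝ)) 1, |g s|) < ε/5 := by
      have e1 := T1.eventually_lt_const (by positivity : (0:ℝ) < ε/5)
      have e2 := T2.eventually_lt_const (by positivity : (0:ℝ) < ε/5)
      obtain ⟨k, h1, h2⟩ := (e1.and e2).exists
      exact ⟨k, h1, h2⟩
    exact ⟨1/(k+5:ℝ), hk5 k, hk5le k, hk1, hk2⟩
  -- the value of η
  set η : ℝ := min (min η₁ η₂) η₃ with hηdef
  have hηpos : 0 < η := lt_min (lt_min hη₁pos hη₂pos) hη₃pos
  have hηle : η ≤ 1/5 := le_trans (min_le_right _ _) hη₃le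
  have hηη₁ : η ≤ η₁ := le_trans (min_le_left _ _) (min_le_left _ _)
  have hηη₂ : η ≤ η₂ := le_trans (min_le_left _ _) (min_le_right _ _)
  have hηη₃ : η ≤ η₃ := min_le_right _ _
  -- minimum of f on the compact core
  have hη2Ioo : η/2 ∈ Set.Ioo (0:ℝ) 1 := ⟨by linarith, by linarith⟩
  have hη2Ioo' : 1 - η/2 ∈ Set.Ioo (0:ℝ) 1 := ⟨by linarith, by linarith⟩
  set K : Set ℝ := Set.Icc (Qc (η/2)) (Qc (1 - η/2)) with hKdef
  have hKsub : K ⊆ Set.Ioo a b := by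
    intro z hz
    exact ⟨lt_of_lt_of_le (hQcIoo _ hη2Ioo).1 hz.1, lt_of_le_of_lt hz.2 (hQcIoo _ hη2Ioo').2⟩
  have hKne : K.Nonempty := ⟨Qc (η/2), le_rfl, hQc_mono (by linarith)⟩
  obtain ⟨z, hzK, hzmin⟩ := (isCompact_Icc).exists_isMinOn hKne
    (hfcont.mono (fun y hy => Set.Ioo_subset_Icc_self (hKsub hy)))
  set m : ℝ := f z with hmdef
  have hmpos : 0 < m := hfpos z (hKsub hzK)
  -- middle part: dominated convergence
  have hmidsub : Set.Icc η (1-η) ⊆ Set.Ioo (0:ℝ) 1 := fun s hs =>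
    ⟨lt_of_lt_of_le hηpos hs.1, lt_of_le_of_lt hs.2 (by linarith)⟩
  have hMid : Tendsto (fun n => ∫ s in Set.Icc η (1-η), |gn n s - g s|) atTop (nhds 0) := by
    have h00 : (0:ℝ) = ∫ s in Set.Icc η (1-η), (0:ℝ) := by simp
    rw [h00]
    apply tendsto_integral_filter_of_dominated_convergence (bound := fun s => C0/m + |g s|)
    · exact Filter.Eventually.of_forall fun n =>
        (((hgnmeas n).sub hgmeas).abs).aestronglyMeasurable
    · filter_upwards [hbnd_ev 1 one_pos, hC0_ev,
        htnC0.eventually_lt_const (by positivity : (0:ℝ) < η/2)] with n hb1 hbC htn2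
      filter_upwards [ae_restrict_mem measurableSet_Icc] with s hsI
      have hsIoo : s ∈ Set.Ioo (0:ℝ) 1 := hmidsub hsI
      have hgnb : |gn n s| ≤ C0/m := by
        obtain ⟨hs1, hs2⟩ := hEST2 n s hsIoo C0 hbC
        have hQNK : QN n s ∈ K := by
          constructor
          · exact le_trans (hQc_mono (by linarith [hsI.1] : η/2 ≤ s - |tn n| * C0)) hs1
          · exact le_trans hs2 (hQc_mono (by linarith [hsI.2] : s + |tn n| * C0 ≤ 1 - η/2))
        have hQcK : Qc s ∈ K :=
          ⟨hQc_mono (by linarith [hsI.1]), hQc_mono (by linarith [hsI.2])⟩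
        have hest := (hEST1 n s hsIoo 1 zero_le_one hb1).2
        have hFQcs : F (Qc s) = s := hQc_eq s hsIoo.1.le hsIoo.2.le
        have hhb : |tn n * h (QN n s)| ≤ |tn n| * Ch := by
          rw [abs_mul]
          exact mul_le_mul_of_nonneg_left (hCh _ (hQN_spec n s).1) (abs_nonneg _)
        have hFF : |F (QN n s) - F (Qc s)| ≤ |tn n| * C0 := by
          rw [hFQcs]
          have h1 := abs_le.1 hest
          have h2 := abs_le.1 hhb
          rw [abs_le]
          constructor
          · rw [hC0def]; nlinarith [h1.1, h2.2]
          · rw [hC0def]; nlinarith [h1.2, h2.1]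
        obtain ⟨ξ', hξ'mem, _, hξ'eq⟩ := mvt_pair hFderiv (hQc_spec s).1 (hQN_spec n s).1
        have hξ'K : ξ' ∈ K := Set.uIcc_subset_Icc hQcK hQNK hξ'mem
        have hfξ' : m ≤ f ξ' := hzmin hξ'K
        have habs2 : |QN n s - Qc s| * m ≤ |tn n| * C0 := by
          have : |f ξ' * (QN n s - Qc s)| = f ξ' * |QN n s - Qc s| := by
            rw [abs_mul, abs_of_nonneg (le_trans hmpos.le hfξ')]
          calc |QN n s - Qc s| * m ≤ |QN n s - Qc s| * f ξ' := by
                gcongr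
            _ = |f ξ' * (QN n s - Qc s)| := by rw [this]; ring
            _ = |F (QN n s) - F (Qc s)| := by rw [hξ'eq]
            _ ≤ |tn n| * C0 := hFF
        rw [hgndef, abs_div]
        rw [div_le_div_iff₀ (abs_pos.2 (htn0 n)) hmpos]
        calc |QN n s - Qc s| * m ≤ |tn n| * C0 := habs2
          _ = C0 * |tn n| := by ring
      calc ‖|gn n s - g s|‖ = |gn n s - g s| := by rw [Real.norm_eq_abs, abs_abs]
        _ ≤ |gn n s| + |g s| := abs_sub _ _
        _ ≤ C0/m + |g s| := by linarith
    · refine Integrable.add ?_ (hg_int.mono_set hmidsub).abs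
      exact (integrableOn_const (lt_of_le_of_lt
        (measure_mono hmidsub) hvol1).ne)
    · filter_upwards [ae_restrict_mem measurableSet_Icc] with s hsI
      have hsIoo : s ∈ Set.Ioo (0:ℝ) 1 := hmidsub hsI
      have := ((hPT s hsIoo).sub
        (tendsto_const_nhds : Tendsto (fun _ : ℕ => g s) atTop (nhds (g s)))).abs
      simpa using this
  -- eventual bound
  filter_upwards [hC0_ev, htnC0.eventually_lt_const (by positivity : (0:ℝ) < η/2),
    hMid.eventually_lt_const (by positivity : (0:ℝ) < ε/5)] with n hbC htn2 hmid
  have hεn : 0 < |tn n| * C0 := mul_pos (abs_pos.2 (htn0 n)) hC0pos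
  set A : Set ℝ := Set.Ioo 0 η with hAdef
  set B : Set ℝ := Set.Icc η (1-η) with hBdef
  set Cs : Set ℝ := Set.Ioo (1-η) 1 with hCsdef
  have hAsub : A ⊆ Set.Ioo (0:ℝ) 1 := Set.Ioo_subset_Ioo le_rfl (by linarith)
  have hCsub : Cs ⊆ Set.Ioo (0:ℝ) 1 := Set.Ioo_subset_Ioo (by linarith) le_rfl
  have hint_fn : IntegrableOn (fun s => |gn n s - g s|) (Set.Ioo (0:ℝ) 1) :=
    ((int_gn n).sub hg_int).abs
  have hIA : IntegrableOn (fun s => |gn n s - g s|) A := hint_fn.mono_set hAsub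
  have hIB : IntegrableOn (fun s => |gn n s - g s|) B := hint_fn.mono_set hmidsub
  have hIC : IntegrableOn (fun s => |gn n s - g s|) Cs := hint_fn.mono_set hCsub
  have hset : Set.Ioo (0:ℝ) 1 = A ∪ (B ∪ Cs) := by
    ext s
    constructor
    · intro hs
      rcases lt_or_ge s η with h1 | h1
      · exact Or.inl ⟨hs.1, h1⟩
      · rcases le_or_gt s (1-η) with h2 | h2
        · exact Or.inr (Or.inl ⟨h1, h2⟩)
        · exact Or.inr (Or.inr ⟨h2, hs.2⟩)
    · intro hs
      rcases hs with h1 | h1 | h1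
      · exact hAsub h1
      · exact hmidsub h1
      · exact hCsub h1
  have hd2 : Disjoint B Cs := by
    rw [Set.disjoint_left]
    intro s hs1 hs2
    exact absurd hs1.2 (not_le.2 hs2.1)
  have hd1 : Disjoint A (B ∪ Cs) := by
    rw [Set.disjoint_left]
    intro s hs1 hs2
    rcases hs2 with h2 | h2
    · exact absurd h2.1 (not_le.2 hs1.2)
    · linarith [hs1.2, h2.1, hηle]
  have hsplit : ∫ s in Set.Ioo (0:ℝ) 1, |gn n s - g s|
      = (∫ s in A, |gn n s - g s|) + ((∫ s in B, |gn n s - g s|) + ∫ s in Cs, |gn n s - g s|) := by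
    rw [hset, MeasureTheory.setIntegral_union hd1 (measurableSet_Icc.union measurableSet_Ioo)
      hIA (hIB.union hIC),
      MeasureTheory.setIntegral_union hd2 measurableSet_Ioo hIB hIC]
  -- tail bounds for gn
  have htailA : ∫ s in A, |gn n s| < ε/5 := by
    have h1 := tail_gn n 0 η le_rfl (by linarith) hbC (by linarith)
    have h2 : Qc (0 - |tn n| * C0) = a := hQc0 _ (by linarith)
    have h3 : Qc (η + |tn n| * C0) ≤ Qc (2*η) := hQc_mono (by linarith)
    have h4 : Qc (2*η) ≤ Qc (2*η₁) := hQc_mono (by linarith)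
    calc ∫ s in A, |gn n s| ≤ 2 * C0 * (Qc (η + |tn n| * C0) - Qc (0 - |tn n| * C0)) := h1
      _ ≤ 2 * C0 * (Qc (2*η₁) - a) := by rw [h2]; gcongr; linarith
      _ < ε/5 := hη₁
  have htailC : ∫ s in Cs, |gn n s| < ε/5 := by
    have h1 := tail_gn n (1-η) 1 (by linarith) le_rfl hbC (by linarith)
    have h2 : Qc (1 + |tn n| * C0) = b := hQc1 _ (by linarith)
    have h3 : Qc (1 - 2*η₂) ≤ Qc (1 - η - |tn n| * C0) := hQc_mono (by linarith)
    calc ∫ s in Cs, |gn n s| ≤ 2 * C0 * (Qc (1 + |tn n| * C0) - Qc (1 - η - |tn n| * C0)) := h1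
      _ ≤ 2 * C0 * (b - Qc (1 - 2*η₂)) := by rw [h2]; gcongr
      _ < ε/5 := hη₂
  -- tail bounds for g
  have hgA : ∫ s in A, |g s| < ε/5 := by
    refine lt_of_le_of_lt ?_ hη₃l
    refine setIntegral_mono_set (hg_int.mono_set (Set.Ioo_subset_Ioo le_rfl
      (by linarith))).abs (Filter.Eventually.of_forall fun s => abs_nonneg _) ?_
    exact HasSubset.Subset.eventuallyLE (Set.Ioo_subset_Ioo le_rfl hηη₃)
  have hgC : ∫ s in Cs, |g s| < ε/5 := by
    refine lt_of_le_of_lt ?_ hη₃u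
    refine setIntegral_mono_set (hg_int.mono_set (Set.Ioo_subset_Ioo
      (by linarith) le_rfl)).abs (Filter.Eventually.of_forall fun s => abs_nonneg _) ?_
    exact HasSubset.Subset.eventuallyLE (Set.Ioo_subset_Ioo (by linarith) le_rfl)
  -- combine tails
  have htriA : ∫ s in A, |gn n s - g s| ≤ (∫ s in A, |gn n s|) + ∫ s in A, |g s| := by
    have hstep : ∫ s in A, |gn n s - g s| ≤ ∫ s in A, (|gn n s| + |g s|) := by
      refine setIntegral_mono_on hIA ?_ measurableSet_Ioo (fun s _ => abs_sub _ _)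
      exact ((int_gn n).mono_set hAsub).abs.add ((hg_int.mono_set hAsub)).abs
    rw [MeasureTheory.integral_add ((int_gn n).mono_set hAsub).abs
      ((hg_int.mono_set hAsub)).abs] at hstep
    exact hstep
  have htriC : ∫ s in Cs, |gn n s - g s| ≤ (∫ s in Cs, |gn n s|) + ∫ s in Cs, |g s| := by
    have hstep : ∫ s in Cs, |gn n s - g s| ≤ ∫ s in Cs, (|gn n s| + |g s|) := by
      refine setIntegral_mono_on hIC ?_ measurableSet_Ioo (fun s _ => abs_sub _ _)
      exact ((int_gn n).mono_set hCsub).abs.add ((hg_int.mono_set hCsub)).abs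
    rw [MeasureTheory.integral_add ((int_gn n).mono_set hCsub).abs
      ((hg_int.mono_set hCsub)).abs] at hstep
    exact hstep
  -- final computation
  rw [Real.norm_eq_abs, abs_of_nonneg (integral_nonneg fun s => abs_nonneg _)]
  rw [hsplit]
  have hmid' : ∫ s in B, |gn n s - g s| < ε/5 := hmid
  calc (∫ s in A, |gn n s - g s|) + ((∫ s in B, |gn n s - g s|) + ∫ s in Cs, |gn n s - g s|)
      ≤ ((∫ s in A, |gn n s|) + ∫ s in A, |g s|)
        + ((∫ s in B, |gn n s - g s|) + ((∫ s in Cs, |gn n s|) + ∫ s in Cs, |g s|)) := by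
        gcongr
    _ < ε/5 + ε/5 + (ε/5 + (ε/5 + ε/5)) := by
        gcongr
    _ = ε := by ring
end
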